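/- Let k ≥ 1 and n ≥ 2 be integers and let L be a k×k integer matrix all of whose row sums and column sums are zero. Let L̃ₙ be the (k+n−1)×(k+n−1) integer block matrix [[nIₖ + L, −J], [−J, (n+k)Iₙ₋₁ − J]] (each J a block of all 1s), and let p_L(x) = det(xIₖ − L) be the characteristic polynomial of L. Then n · |det(L̃ₙ)| = |p_L(−n)| · (n+k)^{n−1}. -/

import Mathlib

open Matrix

lemma keyQ (k m : ℕ) (hk : 1 ≤ k) (hm : 1 ≤ m) (M : Matrix (Fin k) (Fin k) ℚ)
    (hr : M *ᵥ (fun _ => 1) = fun _ => (m + 1 : ℚ))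
    (hc : (fun _ => 1) ᵥ* M = fun _ => (m + 1 : ℚ)) :
    ((m : ℚ) + 1) * (Matrix.fromBlocks M (-(Matrix.of fun _ _ => 1)) (-(Matrix.of fun _ _ => 1))
      (((m : ℚ) + 1 + k) • (1 : Matrix (Fin m) (Fin m) ℚ) - Matrix.of fun _ _ => 1)).det
      = M.det * ((m : ℚ) + 1 + k) ^ m := by
  have hJJ : (Matrix.of fun _ _ => (1:ℚ) : Matrix (Fin m) (Fin m) ℚ) *
      (Matrix.of fun _ _ => (1:ℚ) : Matrix (Fin m) (Fin m) ℚ)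
      = (m : ℚ) • (Matrix.of fun _ _ => (1:ℚ) : Matrix (Fin m) (Fin m) ℚ) := by
    ext i j; simp [Matrix.mul_apply, Finset.sum_const]
  have hJkmJm : (Matrix.of fun _ _ => (1:ℚ) : Matrix (Fin k) (Fin m) ℚ) *
      (Matrix.of fun _ _ => (1:ℚ) : Matrix (Fin m) (Fin m) ℚ)
      = (m : ℚ) • (Matrix.of fun _ _ => (1:ℚ) : Matrix (Fin k) (Fin m) ℚ) := by
    ext i j; simp [Matrix.mul_apply, Finset.sum_const]
  have hJkmJmk : (Matrix.of fun _ _ => (1:ℚ) : Matrix (Fin k) (Fin m) ℚ) *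
      (Matrix.of fun _ _ => (1:ℚ) : Matrix (Fin m) (Fin k) ℚ)
      = (m : ℚ) • (Matrix.of fun _ _ => (1:ℚ) : Matrix (Fin k) (Fin k) ℚ) := by
    ext i j; simp [Matrix.mul_apply, Finset.sum_const]
  have hs : ((m:ℚ) + 1 + k) ≠ 0 := by positivity
  have hk1 : ((k : ℚ) + 1) ≠ 0 := by positivity
  have hm1 : ((m : ℚ) + 1) ≠ 0 := by positivity
  set Jm : Matrix (Fin m) (Fin m) ℚ := Matrix.of fun _ _ => 1 with hJm_def
  set Jk : Matrix (Fin k) (Fin k) ℚ := Matrix.of fun _ _ => 1 with hJk_def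
  set Jkm : Matrix (Fin k) (Fin m) ℚ := Matrix.of fun _ _ => 1 with hJkm_def
  set Jmk : Matrix (Fin m) (Fin k) ℚ := Matrix.of fun _ _ => 1 with hJmk_def
  set E : Matrix (Fin m) (Fin m) ℚ :=
    ((m:ℚ) + 1 + k)⁻¹ • 1 + (((m:ℚ) + 1 + k)⁻¹ * ((k:ℚ) + 1)⁻¹) • Jm with hE_def
  set D : Matrix (Fin m) (Fin m) ℚ := ((m:ℚ) + 1 + k) • 1 - Jm with hD_def
  have hDE : D * E = 1 := by
    rw [hD_def, hE_def, Matrix.sub_mul, Matrix.mul_add, Matrix.mul_add, Matrix.smul_mul,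
      Matrix.smul_mul, Matrix.one_mul, Matrix.one_mul, Matrix.mul_smul, Matrix.mul_smul,
      Matrix.mul_one, hJJ]
    match_scalars <;> field_simp <;> ring
  have hED : E * D = 1 := by
    rw [hD_def, hE_def, Matrix.mul_sub, Matrix.add_mul, Matrix.add_mul, Matrix.mul_smul,
      Matrix.mul_smul, Matrix.mul_one, Matrix.mul_one, Matrix.smul_mul, Matrix.smul_mul,
      Matrix.one_mul, hJJ]
    match_scalars <;> field_simp <;> ring
  letI : Invertible D := ⟨E, hED, hDE⟩
  have hinv : ⅟D = E := rfl
  have hschur := Matrix.det_fromBlocks₂₂ M (-Jkm) (-Jmk) D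
  rw [hinv] at hschur
  have hBEC : (-Jkm) * E * (-Jmk) = ((m:ℚ) * ((k:ℚ) + 1)⁻¹) • Jk := by
    have hneg : (-Jkm) * E * (-Jmk) = Jkm * E * Jmk := by
      simp only [Matrix.neg_mul, Matrix.mul_neg, neg_neg]
    rw [hneg, hE_def, Matrix.mul_add, Matrix.mul_smul, Matrix.mul_one, Matrix.mul_smul,
      hJkmJm, Matrix.add_mul, Matrix.smul_mul, Matrix.smul_mul, Matrix.smul_mul, hJkmJmk]
    match_scalars
    field_simp
    ring
  rw [hBEC] at hschur
  -- determinant of D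
  have hdetD : D.det = ((k:ℚ) + 1) * ((m:ℚ) + 1 + k) ^ (m - 1) := by
    have hcr : Matrix.replicateCol (Fin 1) (fun _ : Fin m => -((m:ℚ) + 1 + k)⁻¹) *
        Matrix.replicateRow (Fin 1) (fun _ : Fin m => (1:ℚ)) = (-((m:ℚ) + 1 + k)⁻¹) • Jm := by
      ext i j
      simp [Matrix.mul_apply, hJm_def]
    have h1 : D = ((m:ℚ) + 1 + k) • ((1 : Matrix (Fin m) (Fin m) ℚ) +
        Matrix.replicateCol (Fin 1) (fun _ : Fin m => -((m:ℚ) + 1 + k)⁻¹) *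
        Matrix.replicateRow (Fin 1) (fun _ : Fin m => (1:ℚ))) := by
      rw [hcr, smul_add, smul_smul, mul_neg, mul_inv_cancel₀ hs, neg_one_smul, hD_def,
        sub_eq_add_neg]
    rw [h1, Matrix.det_smul]
    erw [Matrix.det_one_add_replicateCol_mul_replicateRow (ι := Fin 1)]
    rw [Fintype.card_fin]
    have hdot : (fun _ : Fin m => (1:ℚ)) ⬝ᵥ (fun _ : Fin m => -((m:ℚ) + 1 + k)⁻¹)
        = -(m * ((m:ℚ) + 1 + k)⁻¹) := by
      simp [dotProduct, Finset.sum_const]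
    rw [hdot]
    have hpow : ((m:ℚ) + 1 + k) ^ m = ((m:ℚ) + 1 + k) ^ (m - 1) * ((m:ℚ) + 1 + k) := by
      rw [← pow_succ, Nat.sub_add_cancel hm]
    rw [hpow]
    field_simp
    ring
  rw [hschur, hdetD]
  -- now split on whether M is invertible
  by_cases hM : M.det = 0
  · -- singular case: both sides vanish
    obtain ⟨w, hw0, hwM⟩ := (Matrix.exists_mulVec_eq_zero_iff).mpr hM
    have hsumw : ∑ j, w j = 0 := by
      have h1 : (fun _ : Fin k => (1:ℚ)) ⬝ᵥ (M *ᵥ w) = 0 := by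
        rw [hwM]; simp [dotProduct]
      rw [Matrix.dotProduct_mulVec, hc] at h1
      simp only [dotProduct] at h1
      have h2 : ((m:ℚ) + 1) * ∑ j, w j = 0 := by
        rw [Finset.mul_sum]; rw [← h1]
      rcases mul_eq_zero.mp h2 with h | h
      · exact absurd h hm1
      · exact h
    have hker : (M - ((m:ℚ) * ((k:ℚ) + 1)⁻¹) • Jk) *ᵥ w = 0 := by
      rw [Matrix.sub_mulVec, hwM]
      have h3 : (((m:ℚ) * ((k:ℚ) + 1)⁻¹) • Jk) *ᵥ w = 0 := by
        ext i
        simp [Matrix.mulVec, dotProduct, hJk_def, ← Finset.mul_sum, hsumw]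
      rw [h3, sub_zero]
    have hdet0 : (M - ((m:ℚ) * ((k:ℚ) + 1)⁻¹) • Jk).det = 0 :=
      Matrix.exists_mulVec_eq_zero_iff.mp ⟨w, hw0, hker⟩
    rw [hdet0, hM]
    ring
  · -- invertible case
    have hMunit : IsUnit M.det := isUnit_iff_ne_zero.mpr hM
    have hcr2 : Matrix.replicateCol (Fin 1) (fun _ : Fin k => -((m:ℚ) * ((k:ℚ) + 1)⁻¹)) *
        Matrix.replicateRow (Fin 1) (fun _ : Fin k => (1:ℚ)) = (-((m:ℚ) * ((k:ℚ) + 1)⁻¹)) • Jk := by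
      ext i j
      simp [Matrix.mul_apply, hJk_def]
    have hsplit : M - ((m:ℚ) * ((k:ℚ) + 1)⁻¹) • Jk = M +
        Matrix.replicateCol (Fin 1) (fun _ : Fin k => -((m:ℚ) * ((k:ℚ) + 1)⁻¹)) *
        Matrix.replicateRow (Fin 1) (fun _ : Fin k => (1:ℚ)) := by
      rw [hcr2, neg_smul, ← sub_eq_add_neg]
    have hMinv1 : M⁻¹ *ᵥ (fun _ : Fin k => (1:ℚ)) = fun _ => ((m:ℚ) + 1)⁻¹ := by
      have h1 : M⁻¹ *ᵥ (M *ᵥ (fun _ : Fin k => (1:ℚ))) = fun _ : Fin k => (1:ℚ) := by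
        rw [Matrix.mulVec_mulVec, Matrix.nonsing_inv_mul M hMunit, Matrix.one_mulVec]
      rw [hr] at h1
      have h2 : (fun _ : Fin k => ((m:ℚ) + 1)) = ((m:ℚ) + 1) • (fun _ : Fin k => (1:ℚ)) := by
        ext i; simp
      rw [h2, Matrix.mulVec_smul] at h1
      have h3 := congrArg (fun v => ((m:ℚ)+1)⁻¹ • v) h1
      simp only [smul_smul, inv_mul_cancel₀ hm1, one_smul] at h3
      rw [h3]
      ext i; simp
    have hrowsum : ∀ p ∈ (Finset.univ : Finset (Fin k)), ∑ q, M⁻¹ p q = ((m:ℚ)+1)⁻¹ := by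
      intro p _
      have h5 := congrFun hMinv1 p
      simpa [Matrix.mulVec, dotProduct] using h5
    have hpow : ((m:ℚ) + 1 + k) ^ m = ((m:ℚ) + 1 + k) ^ (m - 1) * ((m:ℚ) + 1 + k) := by
      rw [← pow_succ, Nat.sub_add_cancel hm]
    rw [hsplit]
    erw [Matrix.det_add_replicateCol_mul_replicateRow (ι := Fin 1) hMunit]
    simp only [Matrix.det_unique]
    simp only [Matrix.add_apply, Matrix.one_apply_eq, Matrix.mul_apply, Matrix.replicateRow_apply,
      Matrix.replicateCol_apply, one_mul]
    rw [← Finset.sum_mul, Finset.sum_comm, Finset.sum_congr rfl hrowsum, Finset.sum_const,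
      Finset.card_univ, Fintype.card_fin, nsmul_eq_mul, hpow]
    field_simp
    ring


/-- Theorem 1(3), Corollary B of Brown.
`n · |det L̃ₙ| = |p_L(-n)| · (n+k)^{n-1}`, where `p_L(x) = det(xIₖ - L)`. -/
theorem order_of_cone_critical_group
    (k n : ℕ) (hk : 1 ≤ k) (hn : 2 ≤ n)
    (L : Matrix (Fin k) (Fin k) ℤ)
    (hrow : ∀ i, ∑ j, L i j = 0) (hcol : ∀ j, ∑ i, L i j = 0)
    (Ln : Matrix (Fin k ⊕ Fin (n - 1)) (Fin k ⊕ Fin (n - 1)) ℤ)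
    (hLn : Ln = Matrix.fromBlocks
      ((n : ℤ) • 1 + L) (-(Matrix.of fun _ _ => 1))
      (-(Matrix.of fun _ _ => 1)) (((n + k : ℕ) : ℤ) • 1 - Matrix.of fun _ _ => 1)) :
    (n : ℤ) * |Ln.det| = |((-(n : ℤ)) • 1 - L).det| * ((n + k : ℕ) : ℤ) ^ (n - 1) := by
  have hn1 : 1 ≤ n := le_trans (by norm_num) hn
  have hm : 1 ≤ n - 1 := by omega
  have hcast1 : ((n - 1 : ℕ) : ℚ) = (n : ℚ) - 1 := by
    push_cast [Nat.cast_sub hn1]; ring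
  set M' : Matrix (Fin k) (Fin k) ℚ := (n : ℚ) • 1 + L.map (Int.cast : ℤ → ℚ) with hM'_def
  -- row and column sums of M'
  have hrQ : M' *ᵥ (fun _ => 1) = fun _ => (((n - 1 : ℕ) : ℚ) + 1) := by
    ext i
    have hLsum : ∑ j, ((L i j : ℤ) : ℚ) = 0 := by
      rw [← Int.cast_sum, hrow i, Int.cast_zero]
    simp [hM'_def, Matrix.mulVec, dotProduct, Matrix.add_apply, Matrix.smul_apply,
      Matrix.one_apply, Finset.sum_add_distrib, Finset.sum_ite_eq, Matrix.map_apply,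
      hLsum, hcast1]
  have hcQ : (fun _ => 1) ᵥ* M' = fun _ => (((n - 1 : ℕ) : ℚ) + 1) := by
    ext j
    have hLsum : ∑ i, ((L i j : ℤ) : ℚ) = 0 := by
      rw [← Int.cast_sum, hcol j, Int.cast_zero]
    simp [hM'_def, Matrix.vecMul, dotProduct, Matrix.add_apply, Matrix.smul_apply,
      Matrix.one_apply, Finset.sum_add_distrib, Finset.sum_ite_eq, Matrix.map_apply,
      hLsum, hcast1]
  have hQ := keyQ k (n - 1) hk hm M' hrQ hcQ
  -- identify mapped matrices
  have hmapM : ((n : ℤ) • 1 + L).map (Int.cast : ℤ → ℚ) = M' := by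
    ext i j
    rcases eq_or_ne i j with hij | hij
    · subst hij
      simp only [hM'_def, Matrix.map_apply, Matrix.add_apply, Matrix.smul_apply,
        Matrix.one_apply_eq, smul_eq_mul, mul_one]
      push_cast; ring
    · simp only [hM'_def, Matrix.map_apply, Matrix.add_apply, Matrix.smul_apply,
        Matrix.one_apply_ne hij, smul_eq_mul, mul_zero]
      push_cast; ring
  have hmap : Ln.map (Int.cast : ℤ → ℚ) = Matrix.fromBlocks M'
      (-(Matrix.of fun _ _ => 1)) (-(Matrix.of fun _ _ => 1))
      ((((n - 1 : ℕ) : ℚ) + 1 + k) • (1 : Matrix (Fin (n - 1)) (Fin (n - 1)) ℚ) -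
        Matrix.of fun _ _ => 1) := by
    subst hLn
    ext (i | i) (j | j)
    · rcases eq_or_ne i j with hij | hij
      · subst hij
        simp only [hM'_def, Matrix.map_apply, Matrix.fromBlocks_apply₁₁, Matrix.add_apply,
          Matrix.smul_apply, Matrix.one_apply_eq, smul_eq_mul, mul_one]
        push_cast; ring
      · simp only [hM'_def, Matrix.map_apply, Matrix.fromBlocks_apply₁₁, Matrix.add_apply,
          Matrix.smul_apply, Matrix.one_apply_ne hij, smul_eq_mul, mul_zero]
        push_cast; ring
    · simp only [Matrix.map_apply, Matrix.fromBlocks_apply₁₂, Matrix.neg_apply, Matrix.of_apply]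
      push_cast; ring
    · simp only [Matrix.map_apply, Matrix.fromBlocks_apply₂₁, Matrix.neg_apply, Matrix.of_apply]
      push_cast; ring
    · rcases eq_or_ne i j with hij | hij
      · subst hij
        simp only [Matrix.map_apply, Matrix.fromBlocks_apply₂₂, Matrix.sub_apply,
          Matrix.smul_apply, Matrix.one_apply_eq, Matrix.of_apply, smul_eq_mul, mul_one]
        rw [hcast1]; push_cast; ring
      · simp only [Matrix.map_apply, Matrix.fromBlocks_apply₂₂, Matrix.sub_apply,
          Matrix.smul_apply, Matrix.one_apply_ne hij, Matrix.of_apply, smul_eq_mul, mul_zero]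
        push_cast; ring
  -- the integer determinant identity via injectivity of the cast
  have hZ : (n : ℤ) * Ln.det = ((n : ℤ) • 1 + L).det * ((n + k : ℕ) : ℤ) ^ (n - 1) := by
    have hinj : Function.Injective ((↑) : ℤ → ℚ) := Int.cast_injective
    apply hinj
    have hdet1 : ((Ln.det : ℤ) : ℚ) = (Ln.map (Int.cast : ℤ → ℚ)).det := by
      exact RingHom.map_det (Int.castRingHom ℚ) Ln
    have hdet2 : ((((n : ℤ) • 1 + L).det : ℤ) : ℚ)
        = ((((n : ℤ) • 1 + L)).map (Int.cast : ℤ → ℚ)).det := by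
      exact RingHom.map_det (Int.castRingHom ℚ) ((n : ℤ) • 1 + L)
    push_cast [hdet1, hdet2]
    rw [hmap, hmapM]
    have h1 : ((n : ℚ) + k) = (((n - 1 : ℕ) : ℚ) + 1 + k) := by rw [hcast1]; ring
    have h2 : (n : ℚ) = (((n - 1 : ℕ) : ℚ) + 1) := by rw [hcast1]; ring
    rw [h1, h2]
    exact hQ
  -- final absolute-value bookkeeping
  have hnneg : (0 : ℤ) ≤ (n : ℤ) := by positivity
  have hsneg : (0 : ℤ) ≤ ((n + k : ℕ) : ℤ) ^ (n - 1) := by positivity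
  have hneg : ((-(n : ℤ)) • 1 - L) = -((n : ℤ) • 1 + L) := by
    rw [neg_smul, sub_eq_add_neg, neg_add]
  calc (n : ℤ) * |Ln.det| = |(n : ℤ) * Ln.det| := by
        rw [abs_mul, abs_of_nonneg hnneg]
    _ = |((n : ℤ) • 1 + L).det * ((n + k : ℕ) : ℤ) ^ (n - 1)| := by rw [hZ]
    _ = |((n : ℤ) • 1 + L).det| * ((n + k : ℕ) : ℤ) ^ (n - 1) := by
        rw [abs_mul, abs_of_nonneg hsneg]
    _ = |((-(n : ℤ)) • 1 - L).det| * ((n + k : ℕ) : ℤ) ^ (n - 1) := by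
        rw [hneg, Matrix.det_neg, abs_mul, abs_pow, abs_neg, abs_one, one_pow, one_mul]
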